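/- Let H be a finitely generated abelian group and Σ a nonempty set of primes. Then the Σ-torsion subgroup of the quotient H^{∧,Σ}/(H/H^{tor,Σ'}) is trivial, where Σ' is the complement of Σ, H^{tor,Σ'} is the prime-to-Σ torsion of H, and H/H^{tor,Σ'} is embedded in the Σ-adic completion H^{∧,Σ} naturally. -/

import Mathlib

section Completions

variable (H : Type*) [AddCommGroup H]

/-- Multiplication by `N` as an additive group homomorphism. -/
def nsmulHom (N : ℕ) : H →+ H :=
  AddMonoidHom.mk' (fun x => N • x) (fun a b => smul_add N a b)

@[simp] lemma nsmulHom_apply (N : ℕ) (x : H) : nsmulHom H N x = N • x := rfl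

/-- The subgroup `N·H` of `H`. -/
def nsub (N : ℕ) : AddSubgroup H := (nsmulHom H N).range

/-- Transition map `H/NH → H/MH` for `M ∣ N`. -/
def transMap {M N : ℕ} (h : M ∣ N) : H ⧸ nsub H N →+ H ⧸ nsub H M :=
  QuotientAddGroup.map _ _ (AddMonoidHom.id H) (by
    rintro x ⟨y, rfl⟩
    obtain ⟨k, rfl⟩ := h
    exact ⟨k • y, by simp [mul_smul]⟩)

/-- The completion of `H` along the family of quotients `H/NH`, for `N` ranging over a set
`S` of positive integers (ordered by divisibility): the subgroup of compatible families in
`∏_{N ∈ S} H/NH`. -/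
def complAlong (S : Set ℕ) : AddSubgroup (∀ N : S, H ⧸ nsub H (N : ℕ)) where
  carrier := {x | ∀ (Mi Ni : S) (h : (Mi : ℕ) ∣ (Ni : ℕ)), transMap H h (x Ni) = x Mi}
  zero_mem' := by intro Mi Ni h; simp
  add_mem' := by
    intro x y hx hy Mi Ni h
    simp only [Pi.add_apply, map_add, hx Mi Ni h, hy Mi Ni h]
  neg_mem' := by
    intro x hx Mi Ni h
    simp only [Pi.neg_apply, map_neg, hx Mi Ni h]

/-- The natural (diagonal) map `H → lim_{N ∈ S} H/NH`. -/
def diagMap (S : Set ℕ) : H →+ complAlong H S where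
  toFun h := ⟨fun _ => QuotientAddGroup.mk h, by
    intro Mi Ni hd
    rfl⟩
  map_zero' := rfl
  map_add' a b := rfl

end Completions

/-- `N` is a `Σ`-integer: positive and all its prime factors lie in `S`. -/
def IsSigmaInt (S : Set ℕ) (N : ℕ) : Prop :=
  0 < N ∧ ∀ p : ℕ, p.Prime → p ∣ N → p ∈ S

lemma IsSigmaInt.one (S : Set ℕ) : IsSigmaInt S 1 :=
  ⟨one_pos, fun p hp hd => absurd (Nat.eq_one_of_dvd_one hd) hp.ne_one⟩

lemma IsSigmaInt.mul {S : Set ℕ} {M N : ℕ} (hM : IsSigmaInt S M) (hN : IsSigmaInt S N) :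
    IsSigmaInt S (M * N) :=
  ⟨Nat.mul_pos hM.1 hN.1, fun p hp hd => by
    rcases (Nat.Prime.dvd_mul hp).mp hd with h | h
    · exact hM.2 p hp h
    · exact hN.2 p hp h⟩

/-- Key lemma: any `N`-torsion element of the completion is the image of an `N`-torsion
element of `H`. -/
lemma torsion_in_image (S : Set ℕ) (H : Type*) [AddCommGroup H] (hfg : AddGroup.FG H)
    (N : ℕ) (hN : IsSigmaInt S N)
    (z : ↥(complAlong H {N | IsSigmaInt S N})) (hz : N • z = 0) :
    z ∈ (diagMap H {N | IsSigmaInt S N}).range := by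
  classical
  -- the N-torsion subgroup K of H is finite
  set K : AddSubgroup H := (nsmulHom H N).ker with hK
  haveI : Module.Finite ℤ H := Module.Finite.iff_addGroup_fg.mpr hfg
  haveI : AddGroup.FG ↥K := by
    have : (AddSubgroup.toIntSubmodule K).FG := IsNoetherian.noetherian _
    exact Module.Finite.iff_addGroup_fg.mp (Module.Finite.iff_fg.mpr this)
  haveI : Finite ↥K := AddCommGroup.finite_of_fg_torsion _ (fun t => by
    refine isOfFinAddOrder_iff_nsmul_eq_zero.mpr ⟨N, hN.1, ?_⟩
    have := t.2
    simp only [hK, AddMonoidHom.mem_ker, nsmulHom_apply] at this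
    exact Subtype.ext this)
  haveI : Fintype ↥K := Fintype.ofFinite _
  -- the sets T M of candidates
  set T : {N | IsSigmaInt S N} → Set ↥K :=
    fun M => {t | (QuotientAddGroup.mk (t : H) : H ⧸ nsub H (M : ℕ)) = z.1 M} with hT
  have hTne : ∀ M, (T M).Nonempty := by
    intro M
    have hMN : ((M : ℕ) * N) ∈ {N | IsSigmaInt S N} := IsSigmaInt.mul M.2 hN
    obtain ⟨a, ha⟩ := QuotientAddGroup.mk_surjective (z.1 ⟨(M : ℕ) * N, hMN⟩)
    have hz' : N • (z.1 ⟨(M : ℕ) * N, hMN⟩) = 0 := by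
      simpa using congrFun (congrArg Subtype.val hz) ⟨(M : ℕ) * N, hMN⟩
    rw [← ha] at hz'
    have : (N • a : H) ∈ nsub H ((M : ℕ) * N) := by
      rwa [← QuotientAddGroup.mk_nsmul, QuotientAddGroup.eq_zero_iff] at hz'
    obtain ⟨b, hb⟩ := this
    simp only [nsmulHom_apply] at hb
    -- N • a = (M*N) • b, so t := a - M • b ∈ K
    have htK : a - (M : ℕ) • b ∈ K := by
      simp only [hK, AddMonoidHom.mem_ker, nsmulHom_apply]
      rw [smul_sub, ← mul_smul, Nat.mul_comm N (M : ℕ), hb, sub_self]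
    refine ⟨⟨_, htK⟩, ?_⟩
    -- in H/MH : t ≡ a ≡ z_M
    have h1 : (QuotientAddGroup.mk (a - (M : ℕ) • b) : H ⧸ nsub H (M : ℕ))
        = QuotientAddGroup.mk a := by
      rw [QuotientAddGroup.eq]
      exact ⟨b, by simp only [nsmulHom_apply]; abel⟩
    have h2 : z.1 M = QuotientAddGroup.mk a := by
      have := z.2 M ⟨(M : ℕ) * N, hMN⟩ ⟨N, rfl⟩
      rw [← this, ← ha]
      rfl
    simpa [hT, h1] using h2.symm
  have hTmono : ∀ (M M' : {N | IsSigmaInt S N}), (M : ℕ) ∣ (M' : ℕ) → T M' ⊆ T M := by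
    intro M M' hd t ht
    have := z.2 M M' hd
    simp only [hT, Set.mem_setOf_eq] at ht ⊢
    rw [← this, ← ht]
    rfl
  -- pick M₀ with minimal card
  have h1S : (1 : ℕ) ∈ {N | IsSigmaInt S N} := IsSigmaInt.one S
  set c : {N | IsSigmaInt S N} → ℕ := fun M => (T M).toFinset.card with hc
  have hrange : (Set.range c).Nonempty := ⟨c ⟨1, h1S⟩, ⟨_, rfl⟩⟩
  obtain ⟨M₀, hM₀⟩ := Nat.sInf_mem hrange
  have hmin : ∀ M, c M₀ ≤ c M := fun M => hM₀ ▸ Nat.sInf_le ⟨M, rfl⟩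
  -- T M₀ ⊆ T M for all M
  have hsub : ∀ M, T M₀ ⊆ T M := by
    intro M
    have hMM : ((M₀ : ℕ) * (M : ℕ)) ∈ {N | IsSigmaInt S N} := IsSigmaInt.mul M₀.2 M.2
    set L : {N | IsSigmaInt S N} := ⟨_, hMM⟩
    have h1 : T L ⊆ T M₀ := hTmono _ _ ⟨(M : ℕ), rfl⟩
    have h2 : T L ⊆ T M := hTmono _ _ ⟨(M₀ : ℕ), mul_comm _ _⟩
    have hcard : (T L).toFinset = (T M₀).toFinset :=
      Finset.eq_of_subset_of_card_le (by simpa using h1) (hmin L)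
    have hLM : T L = T M₀ := by
      rw [← Set.coe_toFinset (T L), hcard, Set.coe_toFinset]
    exact hLM ▸ h2
  obtain ⟨t, ht⟩ := hTne M₀
  refine ⟨(t : H), ?_⟩
  apply Subtype.ext
  funext M
  exact hsub M ht

/-- Let `H` be a finitely generated abelian group and `Σ` a nonempty set of
primes. The copy of `H/H^{tor,Σ'}` inside the `Σ`-adic completion `H^{∧,Σ}` is the image of
the natural map `H → H^{∧,Σ}`; the claim is that the quotient
`H^{∧,Σ}/(H/H^{tor,Σ'})` has trivial `Σ`-torsion: it has no nontrivial `N`-torsion for any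
`Σ`-integer `N`. -/
theorem stmt_12 (S : Set ℕ) (hS : S.Nonempty) (hSp : ∀ p ∈ S, Nat.Prime p)
    (H : Type*) [AddCommGroup H] (hfg : AddGroup.FG H) :
    ∀ (x : ↥(complAlong H {N | IsSigmaInt S N}) ⧸ (diagMap H {N | IsSigmaInt S N}).range)
      (N : ℕ), IsSigmaInt S N → N • x = 0 → x = 0 := by
  intro x N hN hNx
  obtain ⟨y, rfl⟩ := QuotientAddGroup.mk_surjective x
  rw [← QuotientAddGroup.mk_nsmul, QuotientAddGroup.eq_zero_iff] at hNx
  obtain ⟨h, hh⟩ := hNx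
  -- h ∈ N • H : look at level N*N
  have hNN : (N * N) ∈ {N | IsSigmaInt S N} := IsSigmaInt.mul hN hN
  obtain ⟨a, ha⟩ := QuotientAddGroup.mk_surjective (y.1 ⟨N * N, hNN⟩)
  have hcomp : (QuotientAddGroup.mk h : H ⧸ nsub H (N * N)) = N • y.1 ⟨N * N, hNN⟩ := by
    have := congrFun (congrArg Subtype.val hh) ⟨N * N, hNN⟩
    simp at this
    exact this
  rw [← ha, ← QuotientAddGroup.mk_nsmul, QuotientAddGroup.eq] at hcomp
  obtain ⟨b, hb⟩ := hcomp
  simp only [nsmulHom_apply] at hb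
  -- h = N • (a - N • b)
  have h0 : h = N • a - (N * N) • b := by rw [hb]; abel
  have hhN : h = N • (a - N • b) := by rw [smul_sub, ← mul_smul]; exact h0
  have hz : N • (y - diagMap H {N | IsSigmaInt S N} (a - N • b)) = 0 := by
    rw [smul_sub, ← map_nsmul, ← hhN, hh, sub_self]
  obtain ⟨t, ht⟩ := torsion_in_image S H hfg N hN _ hz
  rw [QuotientAddGroup.eq_zero_iff]
  exact ⟨t + (a - N • b), by rw [map_add, ht]; abel⟩
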